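/- Let k ≥ 1 be an integer, a = (a₀,…,a_{k−1}) ∈ {±1}^k, and N ≥ 3 an odd integer. Then for every j = 0, 1, …, k−1, one has |N^j θ_{a,N} − N^j θ_{(a₀,…,a_j),N}| < π/2, where θ_{(a₀,…,a_j),N} is defined using the truncated tuple (a₀,…,a_j) ∈ {±1}^{j+1}. -/
import Mathlib


open Real

noncomputable section

abbrev SL2 := Matrix.SpecialLinearGroup (Fin 2) ℝ

/-- inverse hyperbolic cosine -/
def acosh (x : ℝ) : ℝ := Real.log (x + Real.sqrt (x ^ 2 - 1))

/-- the "pseudo-distance from the origin" ‖g‖ = arcosh((g₁₁²+g₁₂²+g₂₁²+g₂₂²)/2) -/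
def gnorm (g : SL2) : ℝ :=
  acosh ((g.1 0 0 ^ 2 + g.1 0 1 ^ 2 + g.1 1 0 ^ 2 + g.1 1 1 ^ 2) / 2)

def z1 (x : SL2) : ℂ :=
  (((x.1 0 0 + x.1 1 1 : ℝ) : ℂ) + Complex.I * ((x.1 1 0 - x.1 0 1 : ℝ) : ℂ)) / 2

def z2 (x : SL2) : ℂ :=
  (((x.1 0 1 + x.1 1 0 : ℝ) : ℂ) + Complex.I * ((x.1 0 0 - x.1 1 1 : ℝ) : ℂ)) / 2

/-- the spherical function ψ_{m,k}(x) = z₁(x)^{-(k+2m)} z₂(x)^k -/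
def psi (m k : ℕ) (x : SL2) : ℂ := z1 x ^ (-(k + 2 * m : ℤ)) * z2 x ^ k

/-- γ is central iff both components are ±1 -/
def IsCentral (γ : SL2 × SL2) : Prop :=
  (γ.1.1 = 1 ∨ γ.1.1 = -1) ∧ (γ.2.1 = 1 ∨ γ.2.1 = -1)

/-- ε_Γ -/
def epsGamma (Γ : Set (SL2 × SL2)) : ℝ :=
  (1 / 3) * sInf {r | ∃ γ ∈ Γ, ¬IsCentral γ ∧ r = |gnorm γ.1 - gnorm γ.2|}

/-- the set counted by N_Γ(x,R) -/
def orbitSet (Γ : Set (SL2 × SL2)) (x : SL2) (R : ℝ) : Set (SL2 × SL2) :=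
  {γ | γ ∈ Γ ∧ gnorm (γ.1 * x * γ.2⁻¹) ≤ R}

/-- the constant m(C,α,ε,s) -/
def mConst (C α ε : ℝ) (s : ℕ) : ℝ :=
  (Real.log 2 * s + 2 * α * ε + Real.log (1 + 2 ^ s * C * Real.exp (6 * α * ε))) /
    Real.log (Real.cosh ε)

def chi (x : ℝ) : ℝ := if x = 1 then 0 else 1

/-- θ_{a,N} for a tuple a of length k (with the convention a_{-1} = 1) -/
def thetaAN (a : ℕ → ℝ) (k : ℕ) (N : ℝ) : ℝ :=
  Real.pi * ∑ i ∈ Finset.range k,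
    (chi (a i) - if i = 0 then 0 else chi (a (i - 1))) * N ^ (-(i : ℤ))

/-- the sign tuple a(b) attached to b -/
def signOf (b : ℕ → ℝ) (j : ℕ) : ℝ := if 0 ≤ b j then 1 else -1

/-- ψ_{m,b} = Σ_{j<k} b_j ψ_{m,3^j} -/
def psiB (m k : ℕ) (b : ℕ → ℝ) (x : SL2) : ℂ :=
  ∑ j ∈ Finset.range k, (b j : ℂ) * psi m (3 ^ j) x

/-- f_b(u) = Σ_{j<k} b_j cos(3^j θ_{a(b),3}) u^{3^j} -/
def fb (k : ℕ) (b : ℕ → ℝ) (u : ℝ) : ℝ :=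
  ∑ j ∈ Finset.range k, b j * Real.cos (3 ^ j * thetaAN (signOf b) k 3) * u ^ 3 ^ j

/-- the rotation matrix k(θ) -/
def kMat (θ : ℝ) : SL2 :=
  ⟨!![Real.cos θ, -Real.sin θ; Real.sin θ, Real.cos θ], by
    simp [Matrix.det_fin_two_of]
    nlinarith [Real.sin_sq_add_cos_sq θ]⟩

/-- the diagonal matrix a(t) -/
def aMat (t : ℝ) : SL2 :=
  ⟨!![Real.exp t, 0; 0, Real.exp (-t)], by
    simp [Matrix.det_fin_two_of, ← Real.exp_add]⟩

end
theorem stmt8 (k : ℕ) (hk : 1 ≤ k) (a : ℕ → ℝ) (ha : ∀ j < k, a j = 1 ∨ a j = -1)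
    (N : ℕ) (hN3 : 3 ≤ N) (hNodd : Odd N) :
    ∀ j < k, |(N : ℝ) ^ j * thetaAN a k N - (N : ℝ) ^ j * thetaAN a (j + 1) N| < Real.pi / 2 := by
  intro j hj
  have hN : (3:ℝ) ≤ N := by exact_mod_cast hN3
  set r : ℝ := (N:ℝ)⁻¹ with hr
  have hr0 : 0 < r := by positivity
  have hr3 : r ≤ 1/3 := by
    rw [hr, show (1:ℝ)/3 = 3⁻¹ by norm_num]
    exact inv_anti₀ (by norm_num) hN
  have hsplit : thetaAN a k N = thetaAN a (j+1) N +
      Real.pi * ∑ i ∈ Finset.Ico (j+1) k, (chi (a i) - chi (a (i-1))) * r ^ i := by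
    unfold thetaAN
    rw [← Finset.sum_range_add_sum_Ico _ (show j+1 ≤ k by omega), mul_add]
    congr 1
    congr 1
    apply Finset.sum_congr rfl
    intro i hi
    have hi1 : i ≠ 0 := by have := (Finset.mem_Ico.mp hi).1; omega
    rw [if_neg hi1, hr, zpow_neg, zpow_natCast, inv_pow]
  set S := ∑ i ∈ Finset.Ico (j+1) k, (chi (a i) - chi (a (i-1))) * r ^ i with hS
  have hkey : (N : ℝ) ^ j * thetaAN a k N - (N : ℝ) ^ j * thetaAN a (j + 1) N
      = Real.pi * ((N:ℝ)^j * S) := by rw [hsplit]; ring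
  have habs : |S| ≤ ∑ i ∈ Finset.Ico (j+1) k, r ^ i := by
    refine (Finset.abs_sum_le_sum_abs _ _).trans (Finset.sum_le_sum fun i _ => ?_)
    rw [abs_mul, abs_of_nonneg (pow_pos hr0 i).le]
    have h1 : |chi (a i) - chi (a (i-1))| ≤ 1 := by
      unfold chi; split_ifs <;> norm_num
    nlinarith [pow_pos hr0 i]
  have hsum : (N:ℝ)^j * ∑ i ∈ Finset.Ico (j+1) k, r ^ i < 1/2 := by
    rw [Finset.mul_sum, Finset.sum_Ico_eq_sum_range]
    have hNr : (N:ℝ)^j * r^j = 1 := by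
      rw [hr, ← mul_pow, mul_inv_cancel₀ (by linarith), one_pow]
    have heq : ∀ i ∈ Finset.range (k - (j+1)), (N:ℝ)^j * r ^ (j+1+i) = r * r ^ i := by
      intro i _
      have : r ^ (j+1+i) = r^j * (r * r^i) := by ring
      rw [this, ← mul_assoc, hNr, one_mul]
    rw [Finset.sum_congr rfl heq, ← Finset.mul_sum]
    have hr1 : r ≠ 1 := by intro h; rw [h] at hr3; norm_num at hr3
    have h13 : (0:ℝ) < 1 - r := by nlinarith
    have hgeo : ∑ i ∈ Finset.range (k - (j+1)), r ^ i < (1 - r)⁻¹ := by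
      rw [geom_sum_eq hr1]
      rw [div_lt_iff_of_neg (by nlinarith : r - 1 < 0)]
      have hp := pow_pos hr0 (k - (j+1))
      have hm1 : (r - 1) / (1 - r) = -1 := by
        rw [div_eq_iff (by nlinarith : (1:ℝ) - r ≠ 0)]; ring
      rw [inv_mul_eq_div, hm1]
      nlinarith
    have h2 : r * (1-r)⁻¹ ≤ 1/2 := by
      rw [inv_eq_one_div, mul_one_div, div_le_iff₀ h13]; nlinarith
    calc r * ∑ i ∈ Finset.range (k - (j+1)), r ^ i
        < r * (1-r)⁻¹ := mul_lt_mul_of_pos_left hgeo hr0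
      _ ≤ 1/2 := h2
  rw [hkey, abs_mul, abs_of_nonneg Real.pi_pos.le]
  have hNj : (0:ℝ) < (N:ℝ)^j := by positivity
  have : |(N:ℝ)^j * S| < 1/2 := by
    rw [abs_mul, abs_of_nonneg hNj.le]
    calc (N:ℝ)^j * |S| ≤ (N:ℝ)^j * ∑ i ∈ Finset.Ico (j+1) k, r ^ i := by
          exact mul_le_mul_of_nonneg_left habs hNj.le
      _ < 1/2 := hsum
  nlinarith [Real.pi_pos]
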